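/- Let N be a periodic MMB nonlinearity with period T > 0, let u ∈ L²(ℝ) and y(t) = N(t, u(t)). Let h : ℤ → ℝ be Altshuller multiplier data with period T (hₙ ≥ 0 for all n, h₀ = 0, (hₙ) summable with Σ_{n∈ℤ} hₙ < 1). Then Σ_{n∈ℤ} hₙ ∫_ℝ u(t − nT)·y(t) dt ≤ ∫_ℝ u(t)·y(t) dt; equivalently, ∫_ℝ (u(t) − Σ_{n∈ℤ} hₙ u(t − nT))·y(t) dt ≥ 0, i.e. the Altshuller multiplier preserves the positivity of the periodic nonlinearity. -/

import Mathlib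

open MeasureTheory

/-- A periodic memoryless, monotone and bounded (MMB) nonlinearity with period `T`. -/
def IsPeriodicMMB (N : ℝ → ℝ → ℝ) (T : ℝ) : Prop :=
  Measurable (Function.uncurry N) ∧
  (∀ t x : ℝ, N (t + T) x = N t x) ∧
  (∀ t : ℝ, Monotone (N t)) ∧
  ∃ C : ℝ, 0 ≤ C ∧ ∀ t x : ℝ, |N t x| ≤ C * |x|

/-- Altshuller multiplier data: a summable family `h : ℤ → ℝ` with `hₙ ≥ 0`,
`h₀ = 0` and `Σₙ hₙ < 1`. -/
def AltshullerData (h : ℤ → ℝ) : Prop :=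
  Summable h ∧ (∀ n : ℤ, 0 ≤ h n) ∧ h 0 = 0 ∧ ∑' n : ℤ, h n < 1

/-- Gradient inequality for monotone functions:
`∫_z^x f ≤ f x * (x - z)`. -/
lemma altshuller_grad_ineq (f : ℝ → ℝ) (hf : Monotone f) (z x : ℝ) :
    ∫ s in z..x, f s ≤ f x * (x - z) := by
  rcases le_total z x with hzx | hxz
  · have h1 : ∫ s in z..x, f s ≤ ∫ s in z..x, f x :=
      intervalIntegral.integral_mono_on hzx hf.intervalIntegrable
        intervalIntegrable_const (fun s hs => hf hs.2)
    simpa [intervalIntegral.integral_const, smul_eq_mul, mul_comm] using h1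
  · rw [intervalIntegral.integral_symm]
    have h1 : ∫ s in x..z, f x ≤ ∫ s in x..z, f s :=
      intervalIntegral.integral_mono_on hxz intervalIntegrable_const
        hf.intervalIntegrable (fun s hs => hf hs.1)
    have h2 : (z - x) * f x ≤ ∫ s in x..z, f s := by
      simpa [intervalIntegral.integral_const, smul_eq_mul] using h1
    nlinarith [h2]

/-- The potential `Φ t x = ∫_0^x N t s ds` in rescaled form. -/
lemma altshuller_potential_eq (N : ℝ → ℝ → ℝ) (t x : ℝ) :
    (∫ s in (0:ℝ)..x, N t s) = x * ∫ s in (0:ℝ)..(1:ℝ), N t (s * x) := by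
  rcases eq_or_ne x 0 with rfl | hx
  · simp
  · rw [intervalIntegral.integral_comp_mul_right (N t) hx]
    simp [smul_eq_mul, hx, mul_comm, mul_left_comm, mul_assoc]

/-- Bound on the potential. -/
lemma altshuller_potential_bound (N : ℝ → ℝ → ℝ) (C : ℝ)
    (hbd : ∀ t x : ℝ, |N t x| ≤ C * |x|) (t x : ℝ) :
    |∫ s in (0:ℝ)..x, N t s| ≤ C * x ^ 2 := by
  have h := intervalIntegral.norm_integral_le_of_norm_le_const
    (C := C * |x|) (f := N t) (a := (0:ℝ)) (b := x) ?_
  · have : |x - 0| = |x| := by simp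
    rw [Real.norm_eq_abs] at h
    calc |∫ s in (0:ℝ)..x, N t s| ≤ C * |x| * |x - 0| := h
      _ = C * x ^ 2 := by rw [this, mul_assoc, abs_mul_abs_self, sq]
  · intro s hs
    rw [Real.norm_eq_abs]
    refine (hbd t s).trans ?_
    have hC : 0 ≤ C := by
      have := (abs_nonneg (N t 1)).trans (hbd t 1)
      simpa using this
    have : |s| ≤ |x| := by
      rcases Set.mem_uIoc.1 hs with ⟨h1, h2⟩ | ⟨h1, h2⟩
      · rw [abs_of_pos h1, abs_of_nonneg (h1.le.trans h2)]; exact h2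
      · rw [abs_of_nonpos h2, abs_of_neg (h1.trans_le h2)]; linarith
    exact mul_le_mul_of_nonneg_left this hC

lemma altshuller_prod_bound {N : ℝ → ℝ → ℝ} {C : ℝ} (hC : 0 ≤ C)
    (hbd : ∀ t x : ℝ, |N t x| ≤ C * |x|) (u : ℝ → ℝ) (a t : ℝ) :
    ‖u (t - a) * N t (u t)‖ ≤ C * ((u (t - a)) ^ 2 + (u t) ^ 2) := by
  rw [Real.norm_eq_abs, abs_mul]
  have h1 := hbd t (u t)
  have h2 := abs_nonneg (u (t - a))
  have h3 := abs_nonneg (u t)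
  nlinarith [sq_nonneg (|u (t - a)| - |u t|), sq_abs (u (t - a)), sq_abs (u t),
    mul_le_mul_of_nonneg_left h1 h2]

lemma altshuller_prod_integrable {N : ℝ → ℝ → ℝ}
    (hmeas : Measurable (Function.uncurry N)) {C : ℝ} (hC : 0 ≤ C)
    (hbd : ∀ t x : ℝ, |N t x| ≤ C * |x|)
    {u : ℝ → ℝ} (hu : Measurable u) (huL2 : MemLp u 2 (volume : Measure ℝ))
    (a : ℝ) :
    Integrable (fun t : ℝ => u (t - a) * N t (u t)) volume := by
  have hy : Measurable fun t : ℝ => N t (u t) :=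
    hmeas.comp (measurable_id.prodMk hu)
  have hua : Measurable fun t : ℝ => u (t - a) :=
    hu.comp (measurable_id.sub_const a)
  have hbint : Integrable (fun t : ℝ => C * ((u (t - a)) ^ 2 + (u t) ^ 2)) volume :=
    ((huL2.integrable_sq.comp_sub_right a).add huL2.integrable_sq).const_mul C
  exact hbint.mono' (hua.mul hy).aestronglyMeasurable
    (ae_of_all _ fun t => altshuller_prod_bound hC hbd u a t)

lemma altshuller_shift_le (N : ℝ → ℝ → ℝ)
    (hmeas : Measurable (Function.uncurry N))
    (hmono : ∀ t : ℝ, Monotone (N t)) (C : ℝ) (hC : 0 ≤ C)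
    (hbd : ∀ t x : ℝ, |N t x| ≤ C * |x|)
    (u : ℝ → ℝ) (hu : Measurable u) (huL2 : MemLp u 2 (volume : Measure ℝ))
    (a : ℝ) (hper : ∀ t x : ℝ, N (t - a) x = N t x) :
    ∫ t : ℝ, u (t - a) * N t (u t) ≤ ∫ t : ℝ, u t * N t (u t) := by
  set G : ℝ → ℝ := fun t => ∫ s in (0:ℝ)..(u t), N t s with hG
  -- measurability of G
  have hF : StronglyMeasurable (fun p : ℝ × ℝ => N p.1 (p.2 * u p.1)) :=
    (hmeas.comp (measurable_fst.prodMk (measurable_snd.mul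
      (hu.comp measurable_fst)))).stronglyMeasurable
  have hint : StronglyMeasurable fun t : ℝ =>
      ∫ s, N t (s * u t) ∂(volume.restrict (Set.Ioc (0:ℝ) 1)) :=
    StronglyMeasurable.integral_prod_right' (f := fun p : ℝ × ℝ => N p.1 (p.2 * u p.1)) hF
  have hGsm : AEStronglyMeasurable G volume := by
    have : G = fun t => u t * ∫ s, N t (s * u t) ∂(volume.restrict (Set.Ioc (0:ℝ) 1)) := by
      funext t
      show (∫ s in (0:ℝ)..(u t), N t s)
          = u t * ∫ s, N t (s * u t) ∂(volume.restrict (Set.Ioc (0:ℝ) 1))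
      rw [altshuller_potential_eq N t (u t), intervalIntegral.integral_of_le zero_le_one]
    rw [this]
    exact (hu.stronglyMeasurable.mul hint).aestronglyMeasurable
  have hGint : Integrable G volume := by
    refine (huL2.integrable_sq.const_mul C).mono' hGsm (ae_of_all _ fun t => ?_)
    simpa [Real.norm_eq_abs] using altshuller_potential_bound N C hbd t (u t)
  have hGa : Integrable (fun t : ℝ => G (t - a)) volume := hGint.comp_sub_right a
  have I0 : Integrable (fun t : ℝ => u t * N t (u t)) volume := by
    simpa using altshuller_prod_integrable hmeas hC hbd hu huL2 0
  have Ia : Integrable (fun t : ℝ => u (t - a) * N t (u t)) volume :=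
    altshuller_prod_integrable hmeas hC hbd hu huL2 a
  -- pointwise inequality
  have key : ∀ t : ℝ, G t - G (t - a) ≤ u t * N t (u t) - u (t - a) * N t (u t) := by
    intro t
    have hNa : N (t - a) = N t := funext (hper t)
    have hGa' : G (t - a) = ∫ s in (0:ℝ)..(u (t - a)), N t s := by
      rw [hG]; simp only [hNa]
    have hsub : G t - G (t - a) = ∫ s in (u (t - a))..(u t), N t s := by
      rw [hGa', hG]
      exact intervalIntegral.integral_interval_sub_left
        ((hmono t).intervalIntegrable) ((hmono t).intervalIntegrable)
    rw [hsub]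
    have := altshuller_grad_ineq (N t) (hmono t) (u (t - a)) (u t)
    nlinarith [this]
  have h0 : (∫ t : ℝ, (G t - G (t - a))) = 0 := by
    rw [integral_sub hGint hGa, integral_sub_right_eq_self G a, sub_self]
  have hmono' := integral_mono (hGint.sub hGa) (I0.sub Ia) key
  simp only [Pi.sub_apply] at hmono'
  rw [h0, integral_sub I0 Ia] at hmono'
  linarith

theorem altshuller_preserves_positivity (N : ℝ → ℝ → ℝ) (T : ℝ) (hT : 0 < T)
    (hN : IsPeriodicMMB N T) (u : ℝ → ℝ) (hu : Measurable u)
    (huL2 : MemLp u 2 (volume : Measure ℝ))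
    (h : ℤ → ℝ) (hAlt : AltshullerData h) :
    ∑' n : ℤ, h n * ∫ t : ℝ, u (t - n * T) * N t (u t) ≤
      ∫ t : ℝ, u t * N t (u t) := by
  obtain ⟨hmeas, hperT, hmono, C, hC, hbd⟩ := hN
  obtain ⟨hsum, hposh, h00, hlt1⟩ := hAlt
  have hper : ∀ n : ℤ, ∀ t x : ℝ, N (t - n * T) x = N t x := by
    intro n t x
    have hp : Function.Periodic (fun t => N t x) T := fun t => hperT t x
    exact (hp.int_mul n).sub_eq t
  have I0 : Integrable (fun t : ℝ => u t * N t (u t)) volume := by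
    simpa using altshuller_prod_integrable hmeas hC hbd hu huL2 0
  have In : ∀ n : ℤ, Integrable (fun t : ℝ => u (t - n * T) * N t (u t)) volume :=
    fun n => altshuller_prod_integrable hmeas hC hbd hu huL2 ((n : ℝ) * T)
  have hshift : ∀ n : ℤ,
      (∫ t : ℝ, u (t - n * T) * N t (u t)) ≤ ∫ t : ℝ, u t * N t (u t) :=
    fun n => altshuller_shift_le N hmeas hmono C hC hbd u hu huL2 ((n : ℝ) * T) (hper n)
  set S : ℝ := ∫ t : ℝ, (u t) ^ 2 with hS
  have hbnd : ∀ n : ℤ, |∫ t : ℝ, u (t - n * T) * N t (u t)| ≤ C * (S + S) := by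
    intro n
    have h1 := norm_integral_le_integral_norm (μ := (volume : Measure ℝ)) (fun t : ℝ => u (t - n * T) * N t (u t))
    rw [Real.norm_eq_abs] at h1
    refine h1.trans ?_
    have hbint : Integrable (fun t : ℝ => C * ((u (t - n * T)) ^ 2 + (u t) ^ 2)) volume :=
      ((huL2.integrable_sq.comp_sub_right ((n : ℝ) * T)).add huL2.integrable_sq).const_mul C
    have h2 := integral_mono (In n).norm hbint
      (fun t => altshuller_prod_bound hC hbd u ((n : ℝ) * T) t)
    refine h2.trans_eq ?_
    rw [MeasureTheory.integral_const_mul,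
      integral_add (huL2.integrable_sq.comp_sub_right ((n : ℝ) * T)) huL2.integrable_sq,
      integral_sub_right_eq_self (fun t : ℝ => (u t) ^ 2) ((n : ℝ) * T)]
  have hpos0 : 0 ≤ ∫ t : ℝ, u t * N t (u t) := by
    refine integral_nonneg fun t => ?_
    have hN0 : N t 0 = 0 := by
      have := hbd t 0
      simpa [abs_nonpos_iff] using this
    rcases le_total 0 (u t) with hx | hx
    · exact mul_nonneg hx (hN0 ▸ hmono t hx)
    · have : N t (u t) ≤ 0 := hN0 ▸ hmono t hx
      exact mul_nonneg_of_nonpos_of_nonpos hx this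
  have hsum2 : Summable fun n : ℤ => h n * ∫ t : ℝ, u (t - n * T) * N t (u t) := by
    refine Summable.of_norm_bounded (g := fun n => h n * (C * (S + S))) (hsum.mul_right _)
      fun n => ?_
    rw [norm_mul, Real.norm_eq_abs, Real.norm_eq_abs, abs_of_nonneg (hposh n)]
    exact mul_le_mul_of_nonneg_left (hbnd n) (hposh n)
  calc ∑' n : ℤ, h n * ∫ t : ℝ, u (t - n * T) * N t (u t)
      ≤ ∑' n : ℤ, h n * ∫ t : ℝ, u t * N t (u t) :=
        Summable.tsum_le_tsum (fun n => mul_le_mul_of_nonneg_left (hshift n) (hposh n))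
          hsum2 (hsum.mul_right _)
    _ = (∑' n : ℤ, h n) * ∫ t : ℝ, u t * N t (u t) := tsum_mul_right
    _ ≤ 1 * ∫ t : ℝ, u t * N t (u t) := mul_le_mul_of_nonneg_right hlt1.le hpos0
    _ = ∫ t : ℝ, u t * N t (u t) := one_mul _
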